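/- Let φ^(1),…,φ^(k) : X → [−1,1] be statistical queries, v_1,…,v_k ∈ ℝ, τ > 0, and let 𝒞 be a convex set of distributions on the finite set X. Suppose no distribution D̂ ∈ 𝒞 satisfies |φ^(i)(D̂) − v_i| ≤ τ for all i ∈ [k]. Then there exist weights w ∈ ℝ^k with ||w||_1 = 1 and a threshold T ∈ ℝ such that, letting Ψ(x) = Σ_i w_i φ^(i)(x) (a function X → [−1,1]): (a) Ψ(D̂) ≤ T for all D̂ ∈ 𝒞, and (b) every distribution E with |φ^(i)(E) − v_i| ≤ τ/2 for all i satisfies Ψ(E) ≥ T + τ/2. -/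

import Mathlib

open Finset

def IsPMF {X : Type*} [Fintype X] (D : X → ℝ) : Prop :=
  (∀ x, 0 ≤ D x) ∧ ∑ x, D x = 1

private lemma clm_repr {k : ℕ} (f : (Fin k → ℝ) →L[ℝ] ℝ) (b : Fin k → ℝ) :
    f b = ∑ i, b i * f (Pi.single i 1) := by
  conv_lhs => rw [← Finset.univ_sum_single b]
  rw [map_sum]
  congr 1; ext i
  have : Pi.single i (b i) = b i • (Pi.single i (1:ℝ) : Fin k → ℝ) := by
    rw [← Pi.single_smul, smul_eq_mul, mul_one]
  rw [this, map_smul, smul_eq_mul]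

private lemma swap_sum {X : Type*} [Fintype X] {k : ℕ} (w : Fin k → ℝ) (φ : Fin k → X → ℝ)
    (D : X → ℝ) :
    ∑ x, D x * (∑ i, w i * φ i x) = ∑ i, w i * (∑ x, D x * φ i x) := by
  simp_rw [Finset.mul_sum]
  rw [Finset.sum_comm]
  congr 1; ext i; congr 1; ext x; ring

/-- Separating-hyperplane step: if no distribution in the convex set `C` answers all `k`
statistical queries within `±τ` of the targets `v`, then there is a combined query
`Ψ = Σᵢ wᵢ φⁱ` with `‖w‖₁ = 1` and a threshold `T` such that `Ψ(D̂) ≤ T` for all `D̂ ∈ C`,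
while every distribution `E` answering all queries within `±τ/2` has `Ψ(E) ≥ T + τ/2`. -/
theorem stmt11 {X : Type*} [Fintype X] (k : ℕ) (hk : 0 < k)
    (φ : Fin k → X → ℝ) (hφ : ∀ i x, φ i x ∈ Set.Icc (-1:ℝ) 1)
    (v : Fin k → ℝ) (τ : ℝ) (hτ : 0 < τ)
    (C : Set (X → ℝ)) (hCconv : Convex ℝ C) (hCpmf : ∀ D ∈ C, IsPMF D)
    (hsep : ¬ ∃ Dh ∈ C, ∀ i, |(∑ x, Dh x * φ i x) - v i| ≤ τ) :
    ∃ (w : Fin k → ℝ) (T : ℝ), (∑ i, |w i|) = 1 ∧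
      (∀ Dh ∈ C, ∑ x, Dh x * (∑ i, w i * φ i x) ≤ T) ∧
      (∀ E : X → ℝ, IsPMF E → (∀ i, |(∑ x, E x * φ i x) - v i| ≤ τ / 2) →
        T + τ / 2 ≤ ∑ x, E x * (∑ i, w i * φ i x)) := by
  classical
  -- the answer map
  set ans : (X → ℝ) → (Fin k → ℝ) := fun D i => ∑ x, D x * φ i x with hans
  rcases C.eq_empty_or_nonempty with hC | ⟨D₀, hD₀⟩
  · -- C empty: trivial choice
    set i₀ : Fin k := ⟨0, hk⟩
    refine ⟨fun i => if i = i₀ then 1 else 0, -1 - τ/2, ?_, ?_, ?_⟩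
    · rw [Finset.sum_eq_single i₀]
      · simp
      · intro i _ hi; simp [hi]
      · intro h; exact absurd (Finset.mem_univ i₀) h
    · intro Dh hDh; simp [hC] at hDh
    · intro E hE hEc
      have h1 : (-1 - τ/2) + τ/2 = -1 := by ring
      rw [h1]
      have : ∑ x, E x * (∑ i, (if i = i₀ then (1:ℝ) else 0) * φ i x)
          = ∑ x, E x * φ i₀ x := by
        congr 1; ext x; congr 1; simp
      rw [this]
      calc (-1:ℝ) = ∑ x, E x * (-1) := by
            rw [← Finset.sum_mul, hE.2]; ring
        _ ≤ ∑ x, E x * φ i₀ x := by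
            apply Finset.sum_le_sum
            intro x _
            exact mul_le_mul_of_nonneg_left (hφ i₀ x).1 (hE.1 x)
  · -- main case: separate the open box from the image of C
    set A : Set (Fin k → ℝ) := ans '' C with hA
    have hAconv : Convex ℝ A := by
      have hlin : IsLinearMap ℝ ans := by
        constructor
        · intro a b; funext i
          simp [hans, add_mul, Finset.sum_add_distrib]
        · intro c a; funext i
          simp [hans, Finset.mul_sum, mul_assoc]
      exact hCconv.is_linear_image hlin
    set O : Set (Fin k → ℝ) := Set.univ.pi (fun i => Metric.ball (v i) τ) with hO
    have hOopen : IsOpen O := isOpen_set_pi Set.finite_univ (fun i _ => Metric.isOpen_ball)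
    have hOconv : Convex ℝ O :=
      convex_pi (fun i _ => convex_ball (v i) τ)
    have hmemO : ∀ b : Fin k → ℝ, b ∈ O ↔ ∀ i, |b i - v i| < τ := by
      intro b
      simp [hO, Set.mem_pi, Real.dist_eq]
    have hdisj : Disjoint O A := by
      rw [Set.disjoint_left]
      rintro b hbO ⟨D, hD, rfl⟩
      exact hsep ⟨D, hD, fun i => le_of_lt ((hmemO _).1 hbO i)⟩
    obtain ⟨f, u, hfO, hfA⟩ := geometric_hahn_banach_open hOconv hOopen hAconv hdisj
    set w' : Fin k → ℝ := fun i => f (Pi.single i 1) with hw'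
    have hrepr : ∀ b, f b = ∑ i, b i * w' i := fun b => clm_repr f b
    set s : ℝ := ∑ i, |w' i| with hs
    have hs0 : 0 ≤ s := Finset.sum_nonneg fun i _ => abs_nonneg _
    have hspos : 0 < s := by
      rcases hs0.lt_or_eq with h | h
      · exact h
      · exfalso
        have hz : ∀ i, w' i = 0 := by
          intro i
          have := (Finset.sum_eq_zero_iff_of_nonneg (fun i _ => abs_nonneg (w' i))).1 h.symm i
            (Finset.mem_univ i)
          exact abs_eq_zero.1 this
        have hfz : ∀ b, f b = 0 := by
          intro b; rw [hrepr]; simp [hz]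
        have hvO : v ∈ O := (hmemO v).2 (fun i => by simpa using hτ)
        have h1 := hfO v hvO
        have h2 := hfA (ans D₀) ⟨D₀, hD₀, rfl⟩
        rw [hfz] at h1 h2
        linarith
    refine ⟨fun i => -w' i / s, -u / s, ?_, ?_, ?_⟩
    · -- ℓ¹ norm equals 1
      have habs : ∀ i, |(-w' i / s)| = |w' i| / s := by
        intro i
        rw [abs_div, abs_neg, abs_of_pos hspos]
      simp_rw [habs]
      rw [← Finset.sum_div, ← hs, div_self hspos.ne']
    · -- upper bound on C
      intro Dh hDh
      rw [swap_sum]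
      have hfa : u ≤ f (ans Dh) := hfA _ ⟨Dh, hDh, rfl⟩
      rw [hrepr] at hfa
      have heq : ∑ i, (-w' i / s) * ans Dh i = -(∑ i, ans Dh i * w' i) / s := by
        rw [eq_div_iff hspos.ne', Finset.sum_mul, ← Finset.sum_neg_distrib]
        apply Finset.sum_congr rfl
        intro i _
        field_simp
      rw [heq, div_le_div_iff₀ hspos hspos]
      nlinarith
    · -- lower bound near v
      intro E hE hEc
      rw [swap_sum]
      have hkey : ∀ c : ℝ, 0 ≤ c → c < τ/2 →
          (∑ i, ans E i * w' i) + c * s < u := by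
        intro c hc0 hc
        set σ : Fin k → ℝ := fun i => if 0 ≤ w' i then 1 else -1 with hσ
        have hσabs : ∀ i, |σ i| = 1 := by
          intro i; by_cases h : 0 ≤ w' i <;> simp [hσ, h]
        have hσw : ∀ i, σ i * w' i = |w' i| := by
          intro i; by_cases h : 0 ≤ w' i
          · simp [hσ, h, abs_of_nonneg h]
          · push_neg at h
            simp [hσ, not_le.2 h, abs_of_neg h]
        have hbO : (fun i => ans E i + c * σ i) ∈ O := by
          rw [hmemO]
          intro i
          have h1 : |ans E i + c * σ i - v i| ≤ |ans E i - v i| + |c * σ i| := by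
            have h : ans E i + c * σ i - v i = (ans E i - v i) + c * σ i := by ring
            rw [h]; exact abs_add_le _ _
          have h2 : |c * σ i| = c := by
            rw [abs_mul, hσabs, mul_one, abs_of_nonneg hc0]
          have h3 := hEc i
          calc |ans E i + c * σ i - v i| ≤ |ans E i - v i| + |c * σ i| := h1
            _ = |ans E i - v i| + c := by rw [h2]
            _ ≤ τ/2 + c := add_le_add_left h3 c
            _ < τ := by linarith
        have hfb := hfO _ hbO
        rw [hrepr] at hfb
        have heq2 : ∑ i, (ans E i + c * σ i) * w' i
            = (∑ i, ans E i * w' i) + c * s := by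
          rw [hs, Finset.mul_sum, ← Finset.sum_add_distrib]
          apply Finset.sum_congr rfl
          intro i _
          rw [← hσw i]; ring
        rw [heq2] at hfb
        exact hfb
      -- pass to the limit c → τ/2
      have hSu : (∑ i, ans E i * w' i) < u := by
        have := hkey 0 le_rfl (by linarith)
        linarith
      have hlim : (∑ i, ans E i * w' i) + (τ/2) * s ≤ u := by
        by_contra hcon
        push_neg at hcon
        have hg0 : (0:ℝ) < (∑ i, ans E i * w' i) + (τ/2) * s - u := by linarith
        have hgs : (∑ i, ans E i * w' i) + (τ/2) * s - u < (τ/2) * s := by linarith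
        set δ : ℝ := ((∑ i, ans E i * w' i) + (τ/2) * s - u) / (2 * s) with hδ
        have hδ0 : 0 < δ := div_pos hg0 (by linarith)
        have hδlt : δ < τ/2 := by
          rw [hδ, div_lt_iff₀ (by linarith : (0:ℝ) < 2*s)]
          nlinarith
        have hc0 : 0 ≤ τ/2 - δ := by linarith
        have hclt : τ/2 - δ < τ/2 := by linarith
        have hk2 := hkey (τ/2 - δ) hc0 hclt
        have hδs : δ * s = ((∑ i, ans E i * w' i) + (τ/2) * s - u) / 2 := by
          rw [hδ]; field_simp
        nlinarith
      -- convert to the desired form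
      have hgoal : ∑ i, (-w' i / s) * ans E i = -(∑ i, ans E i * w' i) / s := by
        rw [eq_div_iff hspos.ne', Finset.sum_mul, ← Finset.sum_neg_distrib]
        apply Finset.sum_congr rfl
        intro i _
        field_simp
      rw [hgoal, le_div_iff₀ hspos]
      have hexp : (-u / s + τ / 2) * s = -u + τ / 2 * s := by
        field_simp
      rw [hexp]
      linarith
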